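/- Let X be a real Hilbert space of dimension at least 2 and fix basepoint 0. Then any two Gromov sequences in X are equivalent under the transitive closure of the relation E; equivalently, the Gromov boundary of X is a singleton. -/

import Mathlib

open Filter

/-- The Gromov product of `x` and `y` with basepoint `o` in a metric space. -/
noncomputable def gromovProd {α : Type*} [MetricSpace α] (o x y : α) : ℝ :=
  (dist x o + dist y o - dist x y) / 2

/-- `x` is a Gromov sequence with basepoint `o`. -/
def IsGromovSeq {α : Type*} [MetricSpace α] (o : α) (x : ℕ → α) : Prop :=
  Tendsto (fun p : ℕ × ℕ => gromovProd o (x p.1) (x p.2)) atTop atTop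

/-- The relation `E` on Gromov sequences. -/
def GromovRel {α : Type*} [MetricSpace α] (o : α) (x y : ℕ → α) : Prop :=
  Tendsto (fun p : ℕ × ℕ => gromovProd o (x p.1) (y p.2)) atTop atTop

open scoped RealInnerProductSpace

section Aux
set_option linter.unusedSectionVars false

variable {X : Type*} [NormedAddCommGroup X] [InnerProductSpace ℝ X]

lemma gp_key (f g : X) :
    gromovProd 0 f g * (‖f‖ + ‖g‖ + ‖f - g‖) = ‖f‖ * ‖g‖ + ⟪f, g⟫ := by
  have h := norm_sub_sq_real f g
  simp only [gromovProd, dist_eq_norm, sub_zero]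
  linear_combination (-1/2 : ℝ) * h

lemma tendsto_fst_nat : Tendsto (Prod.fst : ℕ × ℕ → ℕ) atTop atTop := by
  rw [← prod_atTop_atTop_eq]; exact tendsto_fst

lemma tendsto_snd_nat : Tendsto (Prod.snd : ℕ × ℕ → ℕ) atTop atTop := by
  rw [← prod_atTop_atTop_eq]; exact tendsto_snd

/-- Sufficient condition for the relation `E`. -/
lemma gromovRel_of_inner {f g : ℕ → X} {ε : ℝ} (hε : 0 < ε)
    (hf : Tendsto (fun n => ‖f n‖) atTop atTop)
    (hg : Tendsto (fun n => ‖g n‖) atTop atTop)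
    (h : ∀ᶠ p : ℕ × ℕ in atTop,
      ε * (‖f p.1‖ * ‖g p.2‖) ≤ ‖f p.1‖ * ‖g p.2‖ + ⟪f p.1, g p.2⟫) :
    GromovRel 0 f g := by
  rw [GromovRel, tendsto_atTop]
  intro C
  set A : ℝ := max 1 (4 * C / ε) with hA
  have hA1 : (1 : ℝ) ≤ A := le_max_left _ _
  have hAC : 4 * C ≤ A * ε := by
    have := le_max_right 1 (4 * C / ε)
    calc 4 * C = 4 * C / ε * ε := by field_simp
    _ ≤ A * ε := by apply mul_le_mul_of_nonneg_right this hε.le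
  have h1 : ∀ᶠ p : ℕ × ℕ in atTop, A ≤ ‖f p.1‖ :=
    (hf.comp tendsto_fst_nat).eventually_ge_atTop A
  have h2 : ∀ᶠ p : ℕ × ℕ in atTop, A ≤ ‖g p.2‖ :=
    (hg.comp tendsto_snd_nat).eventually_ge_atTop A
  filter_upwards [h1, h2, h] with p ha hb hc
  set a := ‖f p.1‖
  set b := ‖g p.2‖
  set d := ‖f p.1 - g p.2‖ with hdd
  have hkey := gp_key (f p.1) (g p.2)
  have hd : d ≤ a + b := norm_sub_le _ _
  have hd0 : (0 : ℝ) ≤ d := norm_nonneg _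
  have hab : A * (a + b) ≤ 2 * (a * b) := by nlinarith
  have h3 : gromovProd 0 (f p.1) (g p.2) = (a + b - d) / 2 := by
    simp only [gromovProd, dist_eq_norm, sub_zero]
    rfl
  rw [h3]
  -- (a+b-d)(a+b+d) = 2(ab + inner) ≥ 2 ε a b ≥ ε A (a+b)
  have h4 : ε * (A * (a + b)) ≤ (a + b - d) * (a + b + d) := by
    have e1 : (a + b - d) * (a + b + d) = 2 * (a * b + ⟪f p.1, g p.2⟫) := by
      have hsq := norm_sub_sq_real (f p.1) (g p.2)
      linear_combination (-1 : ℝ) * hsq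
    nlinarith [mul_le_mul_of_nonneg_left hab hε.le]
  have h5 : (a + b - d) * (a + b + d) ≤ (a + b - d) * (2 * (a + b)) := by
    apply mul_le_mul_of_nonneg_left (by linarith) (by linarith)
  have hpos : (0 : ℝ) < a + b := by linarith
  nlinarith [h4, h5, hAC, hpos, mul_pos hε hpos]

omit [InnerProductSpace ℝ X] in
lemma gromovProd_self (f : X) : gromovProd 0 f f = ‖f‖ := by
  simp [gromovProd, dist_zero_right, dist_self]

lemma norm_tendsto {x : ℕ → X} (hx : IsGromovSeq 0 x) :
    Tendsto (fun n => ‖x n‖) atTop atTop := by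
  have hdiag : Tendsto (fun n : ℕ => ((n, n) : ℕ × ℕ)) atTop atTop := by
    rw [← prod_atTop_atTop_eq]; exact tendsto_id.prodMk tendsto_id
  have h := hx.comp hdiag
  have he : ((fun p : ℕ × ℕ => gromovProd 0 (x p.1) (x p.2)) ∘
      fun n : ℕ => ((n, n) : ℕ × ℕ)) = fun n => ‖x n‖ := by
    funext n; simp [Function.comp, gromovProd_self]
  rwa [he] at h

lemma tendsto_norm_ray (v : X) (hv : ‖v‖ = 1) :
    Tendsto (fun k : ℕ => ‖(k : ℝ) • v‖) atTop atTop := by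
  have he : (fun k : ℕ => ‖(k : ℝ) • v‖) = fun k : ℕ => (k : ℝ) := by
    funext k
    rw [norm_smul, hv, mul_one, Real.norm_natCast]
  rw [he]
  exact tendsto_natCast_atTop_atTop

/-- Every Gromov sequence is `E`-related to a linear ray. -/
lemma exists_ray {x : ℕ → X} (hx : IsGromovSeq 0 x) :
    ∃ v : X, ‖v‖ = 1 ∧ GromovRel 0 x (fun k : ℕ => (k : ℝ) • v) := by
  have hev : ∀ᶠ p : ℕ × ℕ in atTop, 1 ≤ gromovProd 0 (x p.1) (x p.2) :=
    hx.eventually_ge_atTop 1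
  rw [eventually_atTop] at hev
  obtain ⟨a0, ha0⟩ := hev
  set N : ℕ := max a0.1 a0.2 with hNdef
  have hN : ∀ m n : ℕ, N ≤ m → N ≤ n → 1 ≤ gromovProd 0 (x m) (x n) := by
    intro m n hm hn
    exact ha0 (m, n) ⟨(le_max_left _ _).trans hm, (le_max_right _ _).trans hn⟩
  have haN : 1 ≤ ‖x N‖ := by
    have := hN N N le_rfl le_rfl
    rwa [gromovProd_self] at this
  have haN0 : ‖x N‖ ≠ 0 := by linarith
  refine ⟨‖x N‖⁻¹ • x N, ?_, ?_⟩
  · rw [norm_smul, norm_inv, norm_norm, inv_mul_cancel₀ haN0]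
  · have hvnorm : ‖‖x N‖⁻¹ • x N‖ = 1 := by
      rw [norm_smul, norm_inv, norm_norm, inv_mul_cancel₀ haN0]
    refine gromovRel_of_inner (ε := 1 / ‖x N‖) (by positivity) (norm_tendsto hx)
      (tendsto_norm_ray _ hvnorm) ?_
    have h1 : ∀ᶠ p : ℕ × ℕ in atTop, N ≤ p.1 :=
      tendsto_fst_nat.eventually_ge_atTop N
    filter_upwards [h1] with p hm
    set a := ‖x p.1‖ with hadef
    set b := ‖x N‖ with hbdef
    have ha0 : (0 : ℝ) ≤ a := norm_nonneg _
    -- inner product bound from the Gromov condition at the pair (p.1, N)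
    have hgp : 1 ≤ gromovProd 0 (x p.1) (x N) := hN p.1 N hm le_rfl
    have hkey := gp_key (x p.1) (x N)
    have hdge : a - b ≤ ‖x p.1 - x N‖ := by
      have := abs_norm_sub_norm_le (x p.1) (x N)
      have h2 := le_abs_self (‖x p.1‖ - ‖x N‖)
      linarith
    have hsum : a ≤ a + b + ‖x p.1 - x N‖ := by
      have := norm_nonneg (x p.1 - x N)
      linarith
    have hib : a ≤ a * b + ⟪x p.1, x N⟫ := by
      calc a ≤ a + b + ‖x p.1 - x N‖ := hsum
      _ = 1 * (a + b + ‖x p.1 - x N‖) := by ring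
      _ ≤ gromovProd 0 (x p.1) (x N) * (a + b + ‖x p.1 - x N‖) := by
          apply mul_le_mul_of_nonneg_right hgp
          have := norm_nonneg (x p.1 - x N); linarith
      _ = a * b + ⟪x p.1, x N⟫ := hkey
    -- now convert to the ray
    have hk0 : (0 : ℝ) ≤ (p.2 : ℝ) := Nat.cast_nonneg _
    have hnr : ‖(p.2 : ℝ) • (‖x N‖⁻¹ • x N)‖ = (p.2 : ℝ) := by
      rw [norm_smul, hvnorm, mul_one, Real.norm_natCast]
    have hinner : ⟪x p.1, (p.2 : ℝ) • (‖x N‖⁻¹ • x N)⟫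
        = (p.2 : ℝ) * (b⁻¹ * ⟪x p.1, x N⟫) := by
      rw [real_inner_smul_right, real_inner_smul_right]
    rw [hnr, hinner]
    have hbpos : (0 : ℝ) < b := by linarith
    have hfrac : a / b ≤ a + b⁻¹ * ⟪x p.1, x N⟫ := by
      rw [div_le_iff₀ hbpos]
      have heq : (a + b⁻¹ * ⟪x p.1, x N⟫) * b = a * b + ⟪x p.1, x N⟫ := by
        field_simp
      rw [heq]; exact hib
    calc 1 / b * (a * (p.2 : ℝ)) = (p.2 : ℝ) * (a / b) := by ring
    _ ≤ (p.2 : ℝ) * (a + b⁻¹ * ⟪x p.1, x N⟫) := by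
        apply mul_le_mul_of_nonneg_left hfrac hk0
    _ = a * (p.2 : ℝ) + (p.2 : ℝ) * (b⁻¹ * ⟪x p.1, x N⟫) := by ring

/-- Two rays with non-negative inner product are `E`-related. -/
lemma rayRel {v w : X} (hv : ‖v‖ = 1) (hw : ‖w‖ = 1) (hvw : 0 ≤ ⟪v, w⟫) :
    GromovRel 0 (fun k : ℕ => (k : ℝ) • v) (fun k : ℕ => (k : ℝ) • w) := by
  refine gromovRel_of_inner (ε := 1) one_pos (tendsto_norm_ray _ hv)
    (tendsto_norm_ray _ hw) ?_
  filter_upwards with p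
  have h1 : ‖(p.1 : ℝ) • v‖ = (p.1 : ℝ) := by
    rw [norm_smul, hv, mul_one, Real.norm_natCast]
  have h2 : ‖(p.2 : ℝ) • w‖ = (p.2 : ℝ) := by
    rw [norm_smul, hw, mul_one, Real.norm_natCast]
  have h3 : ⟪(p.1 : ℝ) • v, (p.2 : ℝ) • w⟫ = (p.1 : ℝ) * ((p.2 : ℝ) * ⟪v, w⟫) := by
    rw [real_inner_smul_left, real_inner_smul_right]
  rw [h1, h2, h3, one_mul]
  have : 0 ≤ (p.1 : ℝ) * ((p.2 : ℝ) * ⟪v, w⟫) := by positivity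
  linarith

lemma gromovRel_symm {α : Type*} [MetricSpace α] {o : α} {f g : ℕ → α}
    (h : GromovRel o f g) : GromovRel o g f := by
  have hswap : Tendsto (Prod.swap : ℕ × ℕ → ℕ × ℕ) atTop atTop := by
    have := @tendsto_prod_swap ℕ ℕ atTop atTop
    rwa [prod_atTop_atTop_eq] at this
  have h2 := h.comp hswap
  have he : ((fun p : ℕ × ℕ => gromovProd o (f p.1) (g p.2)) ∘ Prod.swap)
      = fun p : ℕ × ℕ => gromovProd o (g p.1) (f p.2) := by
    funext p
    simp only [Function.comp, Prod.swap, gromovProd, Prod.fst, Prod.snd]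
    rw [dist_comm (g p.1) (f p.2)]
    ring
  rwa [he] at h2

/-- In dimension ≥ 2, there is a unit vector orthogonal to any given unit vector. -/
lemma exists_orth (hdim : 2 ≤ Module.rank ℝ X) (v : X) (hv : ‖v‖ = 1) :
    ∃ u : X, ‖u‖ = 1 ∧ ⟪v, u⟫ = 0 := by
  have hz : ∃ z : X, z - ⟪z, v⟫ • v ≠ 0 := by
    by_contra hcon
    push_neg at hcon
    have hle : Module.rank ℝ X ≤ 1 := by
      rw [rank_le_one_iff]
      refine ⟨v, fun z => ⟨⟪z, v⟫, ?_⟩⟩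
      have hz2 := hcon z
      rw [sub_eq_zero] at hz2
      exact hz2.symm
    have h12 : (1 : Cardinal) < 2 := by norm_num
    exact absurd hdim (not_le.mpr (lt_of_le_of_lt hle h12))
  obtain ⟨z, hz⟩ := hz
  set u0 := z - ⟪z, v⟫ • v with hu0
  have hn0 : ‖u0‖ ≠ 0 := norm_ne_zero_iff.mpr hz
  have horth : ⟪v, u0⟫ = 0 := by
    rw [hu0, inner_sub_right, real_inner_smul_right, real_inner_comm z v]
    have : ⟪v, v⟫ = 1 := by
      rw [real_inner_self_eq_norm_sq, hv]; norm_num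
    rw [this]; ring
  refine ⟨‖u0‖⁻¹ • u0, ?_, ?_⟩
  · rw [norm_smul, norm_inv, norm_norm, inv_mul_cancel₀ hn0]
  · rw [real_inner_smul_right, horth, mul_zero]

end Aux

/-- In a real Hilbert space of dimension at least 2, any two Gromov sequences (with
basepoint `0`) are equivalent under the transitive closure of the relation `E`:
the Gromov boundary is a singleton. -/
theorem stmt_5 {X : Type*} [NormedAddCommGroup X] [InnerProductSpace ℝ X]
    [CompleteSpace X] (hdim : 2 ≤ Module.rank ℝ X)
    (x y : ℕ → X) (hx : IsGromovSeq (0 : X) x) (hy : IsGromovSeq (0 : X) y) :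
    Relation.TransGen (GromovRel (0 : X)) x y := by
  obtain ⟨v, hv, hxv⟩ := exists_ray hx
  obtain ⟨v', hv', hyv⟩ := exists_ray hy
  obtain ⟨u, hu, hvu⟩ := exists_orth hdim v hv
  set w : X := if 0 ≤ ⟪v', u⟫ then u else -u with hwdef
  have hw : ‖w‖ = 1 := by
    rw [hwdef]; split_ifs <;> simp [hu]
  have hvw : ⟪v, w⟫ = 0 := by
    rw [hwdef]; split_ifs <;> simp [hvu, inner_neg_right]
  have hv'w : 0 ≤ ⟪v', w⟫ := by
    rw [hwdef]; split_ifs with hcase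
    · exact hcase
    · rw [inner_neg_right]; push_neg at hcase; linarith
  have h2 : GromovRel (0 : X) (fun k : ℕ => (k : ℝ) • v) (fun k : ℕ => (k : ℝ) • w) :=
    rayRel hv hw (le_of_eq hvw.symm)
  have h3 : GromovRel (0 : X) (fun k : ℕ => (k : ℝ) • w) (fun k : ℕ => (k : ℝ) • v') :=
    rayRel hw hv' (by rw [real_inner_comm]; exact hv'w)
  have h4 : GromovRel (0 : X) (fun k : ℕ => (k : ℝ) • v') y := gromovRel_symm hyv
  exact (((Relation.TransGen.single hxv).tail h2).tail h3).tail h4
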